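/- Let (P_n) be a family of polynomials of the form P_n(X) = ∏_{i=1}^{N_n} (X^i − 1) for a sequence of positive integers (N_n). Suppose that for every n the polynomial P_n can be written in the form ∑_{j=0}^{t_n} c_j^{(n)} X^{α_j^{(n)}}(a_n + b_n X)^{β_j^{(n)}} with a_n, b_n, c_j^{(n)} ∈ ℚ, where t_n and the bit sizes of all the c_j^{(n)}, α_j^{(n)} and β_j^{(n)} are bounded above by a polynomial in n (there is a constant k with t_n ≤ n^k + k and all these bit sizes ≤ n^k + k). Then the sequence N_n is also bounded above by a polynomial in n (there is a constant k' with N_n ≤ n^{k'} + k' for all n). No bound on the sizes of a_n and b_n is assumed. -/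

import Mathlib

open Polynomial

/-- The bit size of a rational number: the sum of the bit sizes of its numerator and of its
denominator (in lowest terms), where the bit size of a natural number is the number of bits of
its binary representation. -/
def ratBitSize (q : ℚ) : ℕ := Nat.size q.num.natAbs + Nat.size q.den


lemma aux_wronskian_zero {p q : ℚ[X]} (hq : q ≠ 0)
    (h : derivative p * q = p * derivative q) : ∃ c : ℚ, p = C c * q := by
  rcases eq_or_ne p 0 with rfl | hp
  · exact ⟨0, by simp⟩
  set d := GCDMonoid.gcd p q with hd
  have hd0 : d ≠ 0 := gcd_ne_zero_of_left hp
  set p1 := p / d with hp1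
  set q1 := q / d with hq1
  have hpe : p = d * p1 := (EuclideanDomain.mul_div_cancel' hd0 (gcd_dvd_left p q)).symm
  have hqe : q = d * q1 := (EuclideanDomain.mul_div_cancel' hd0 (gcd_dvd_right p q)).symm
  have hcop : IsCoprime p1 q1 := isCoprime_div_gcd_div_gcd hq
  have hq10 : q1 ≠ 0 := fun h0 => hq (by rw [hqe, h0, mul_zero])
  have hw : derivative p1 * q1 = p1 * derivative q1 := by
    have h2 := h
    rw [hpe, hqe] at h2
    simp only [derivative_mul] at h2
    have expand : d * d * (derivative p1 * q1) = d * d * (p1 * derivative q1) := by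
      linear_combination h2
    exact mul_left_cancel₀ (mul_ne_zero hd0 hd0) expand
  have hwz : wronskian p1 q1 = 0 := by rw [wronskian, hw]; ring
  obtain ⟨hdp1, hdq1⟩ := hcop.wronskian_eq_zero_iff.mp hwz
  have hp1c : p1 = C (p1.coeff 0) :=
    Polynomial.eq_C_of_natDegree_eq_zero (Polynomial.natDegree_eq_zero_of_derivative_eq_zero hdp1)
  have hq1c : q1 = C (q1.coeff 0) :=
    Polynomial.eq_C_of_natDegree_eq_zero (Polynomial.natDegree_eq_zero_of_derivative_eq_zero hdq1)
  obtain ⟨ca, hpa⟩ : ∃ ca, p = C ca * d := ⟨p1.coeff 0, by rw [hpe]; nth_rw 1 [hp1c]; ring⟩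
  obtain ⟨cb, hqb⟩ : ∃ cb, q = C cb * d := ⟨q1.coeff 0, by rw [hqe]; nth_rw 1 [hq1c]; ring⟩
  have hcb : cb ≠ 0 := by
    rintro rfl
    rw [map_zero, zero_mul] at hqb
    exact hq hqb
  refine ⟨ca / cb, ?_⟩
  have e : C (ca / cb) * C cb = C ca := by rw [← C_mul, div_mul_cancel₀ _ hcb]
  rw [hpa, hqb]
  linear_combination -d * e


noncomputable def wrMat (s : ℕ) (g : Fin s → ℚ[X]) : Matrix (Fin s) (Fin s) ℚ[X] :=
  Matrix.of fun i j => derivative^[(i : ℕ)] (g j)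

theorem det_wrMat_ne_zero : ∀ (s : ℕ) (g : Fin s → ℚ[X]),
    LinearIndependent ℚ g → (wrMat s g).det ≠ 0 := by
  intro s
  induction s with
  | zero => intro g _; simp [Matrix.det_isEmpty]
  | succ s IH =>
    intro g hg hdet
    obtain ⟨v, hv0, hv⟩ := Matrix.exists_mulVec_eq_zero_iff.2 hdet
    obtain ⟨j0, hj0⟩ : ∃ j0, v j0 ≠ 0 := Function.ne_iff.mp hv0
    -- the rows
    have R : ∀ i : Fin (s + 1), ∑ j, derivative^[(i : ℕ)] (g j) * v j = 0 := by
      intro i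
      have := congrFun hv i
      simpa [Matrix.mulVec, dotProduct, wrMat] using this
    -- differentiated relation
    have S : ∀ i : Fin s, ∑ j, derivative^[(i : ℕ)] (g j) * derivative (v j) = 0 := by
      intro i
      have h1 := congrArg derivative (R i.castSucc)
      rw [derivative_sum] at h1
      simp only [derivative_mul, map_zero] at h1
      have h2 := R i.succ
      simp only [Fin.coe_castSucc] at h1
      simp only [Fin.val_succ] at h2
      rw [Finset.sum_add_distrib] at h1
      have h3 : ∑ j, derivative (derivative^[(i : ℕ)] (g j)) * v j
          = ∑ j, derivative^[(i : ℕ) + 1] (g j) * v j := by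
        apply Finset.sum_congr rfl
        intro j _
        rw [Function.iterate_succ_apply' derivative]
      rw [h3, h2] at h1
      simpa using h1
    set r : Fin (s + 1) → ℚ[X] := fun j => derivative (v j) * v j0 - v j * derivative (v j0)
      with hr
    have Rr : ∀ i : Fin s, ∑ j, derivative^[(i : ℕ)] (g j) * r j = 0 := by
      intro i
      have e1 := S i
      have e2 := R i.castSucc
      simp only [Fin.coe_castSucc] at e2
      calc ∑ j, derivative^[(i : ℕ)] (g j) * r j
          = (∑ j, derivative^[(i : ℕ)] (g j) * derivative (v j)) * v j0
            - (∑ j, derivative^[(i : ℕ)] (g j) * v j) * derivative (v j0) := by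
            rw [Finset.sum_mul, Finset.sum_mul, ← Finset.sum_sub_distrib]
            apply Finset.sum_congr rfl; intro j _; rw [hr]; ring
        _ = 0 := by rw [e1, e2]; ring
    -- subfamily
    have hg' : LinearIndependent ℚ (g ∘ j0.succAbove) :=
      hg.comp _ (Fin.succAbove_right_injective)
    have hdet' := IH (g ∘ j0.succAbove) hg'
    have hr' : ∀ j : Fin s, r (j0.succAbove j) = 0 := by
      by_contra hcon
      push_neg at hcon
      obtain ⟨j1, hj1⟩ := hcon
      apply hdet'
      rw [← Matrix.exists_mulVec_eq_zero_iff]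
      refine ⟨fun j => r (j0.succAbove j), Function.ne_iff.mpr ⟨j1, hj1⟩, ?_⟩
      funext i
      have := Rr i
      rw [Fin.sum_univ_succAbove _ j0] at this
      have hrj0 : r j0 = 0 := by rw [hr]; ring
      rw [hrj0, mul_zero, zero_add] at this
      simpa [Matrix.mulVec, dotProduct, wrMat] using this
    have hrall : ∀ j, r j = 0 := by
      intro j
      rcases eq_or_ne j j0 with rfl | hne
      · rw [hr]; ring
      · obtain ⟨k, hk⟩ := Fin.exists_succAbove_eq hne
        rw [← hk]; exact hr' k
    -- each v j is a constant multiple of v j0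
    have hc : ∀ j, ∃ c : ℚ, v j = C c * v j0 := by
      intro j
      apply aux_wronskian_zero hj0
      have h4 : derivative (v j) * v j0 - v j * derivative (v j0) = 0 := hrall j
      linear_combination h4
    choose c hcv using hc
    have hcj0 : c j0 = 1 := by
      have := hcv j0
      have h1 : (C (c j0) - 1) * v j0 = 0 := by rw [sub_mul, one_mul, ← this]; ring
      rcases mul_eq_zero.mp h1 with h2 | h2
      · have h3 : C (c j0) = (1 : ℚ[X]) := by linear_combination h2
        exact C_inj.mp (by simpa using h3)
      · exact absurd h2 hj0
    -- linear relation on g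
    have hrel : ∑ j, C (c j) * g j = 0 := by
      have h0 := R 0
      simp only [Fin.val_zero, Function.iterate_zero, id] at h0
      have : ∑ j, g j * v j = (∑ j, C (c j) * g j) * v j0 := by
        rw [Finset.sum_mul]
        apply Finset.sum_congr rfl
        intro j _
        rw [hcv j]; ring
      rw [this] at h0
      rcases mul_eq_zero.mp h0 with h2 | h2
      · exact h2
      · exact absurd h2 hj0
    have := Fintype.linearIndependent_iff.mp hg c ?_ j0
    · rw [hcj0] at this; exact one_ne_zero this
    · rw [← hrel]
      apply Finset.sum_congr rfl
      intro j _
      rw [Polynomial.smul_eq_C_mul]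


noncomputable def hpol (a b : ℚ) (α β : ℕ) : ℕ → ℚ[X]
  | 0 => 1
  | i + 1 =>
      (C (α : ℚ) * (C a + C b * X) + C (β : ℚ) * (C b * X)
        - C (i : ℚ) * (C a + C (2 * b) * X)) * hpol a b α β i
      + X * (C a + C b * X) * derivative (hpol a b α β i)

lemma mul_derivative_pow (p : ℚ[X]) (i : ℕ) :
    p * derivative (p ^ i) = C (i : ℚ) * p ^ i * derivative p := by
  cases i with
  | zero => simp
  | succ i =>
    rw [derivative_pow]
    push_cast
    ring_nf

lemma X_mul_derivative_X_pow (α : ℕ) :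
    X * derivative (X ^ α : ℚ[X]) = C (α : ℚ) * X ^ α := by
  cases α with
  | zero => simp
  | succ α =>
    rw [derivative_X_pow]
    push_cast
    ring_nf

lemma Xu_mul_derivative_g (a b : ℚ) (α β : ℕ) :
    X * (C a + C b * X) * derivative (X ^ α * (C a + C b * X) ^ β)
      = X ^ α * (C a + C b * X) ^ β
        * (C (α : ℚ) * (C a + C b * X) + C (β : ℚ) * (C b * X)) := by
  set u : ℚ[X] := C a + C b * X with hu
  have hdu : derivative u = C b := by rw [hu]; simp
  rw [derivative_mul]
  have h1 := X_mul_derivative_X_pow α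
  have h2 := mul_derivative_pow u β
  rw [hdu] at h2
  linear_combination u ^ β * u * h1 + X ^ α * X * h2

lemma iterate_derivative_g (a b : ℚ) (α β : ℕ) : ∀ i : ℕ,
    derivative^[i] (X ^ α * (C a + C b * X) ^ β) * (X * (C a + C b * X)) ^ i
      = X ^ α * (C a + C b * X) ^ β * hpol a b α β i := by
  intro i
  induction i with
  | zero => simp [hpol]
  | succ i IH =>
    set u : ℚ[X] := C a + C b * X with hu
    set g : ℚ[X] := X ^ α * u ^ β with hg
    have hdu : derivative u = C b := by rw [hu]; simp
    have E1 : derivative (derivative^[i] g) * (X * u) ^ i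
        + derivative^[i] g * derivative ((X * u) ^ i)
        = derivative g * hpol a b α β i + g * derivative (hpol a b α β i) := by
      have := congrArg derivative IH
      rwa [derivative_mul, derivative_mul] at this
    have A : (X * u) * derivative ((X * u) ^ i)
        = C (i : ℚ) * (X * u) ^ i * derivative (X * u) := mul_derivative_pow _ i
    have hdXu : derivative (X * u) = C a + C (2 * b) * X := by
      rw [derivative_mul, hdu, hu, C_mul]
      simp only [derivative_X, one_mul, map_ofNat]
      ring
    have B := Xu_mul_derivative_g a b α β
    rw [← hu, ← hg] at B
    rw [Function.iterate_succ_apply' derivative]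
    show derivative (derivative^[i] g) * (X * u) ^ (i + 1) = g * hpol a b α β (i + 1)
    rw [hpol]
    rw [hdXu] at A
    linear_combination (X * u) * E1 - (derivative^[i] g) * A + hpol a b α β i * B
      - (C (i : ℚ) * (C a + C (2 * b) * X)) * IH
lemma natDegree_hpol_le (a b : ℚ) (α β : ℕ) : ∀ i : ℕ, (hpol a b α β i).natDegree ≤ i := by
  intro i
  induction i with
  | zero => simp [hpol]
  | succ i IH =>
    rw [hpol]
    apply le_trans (natDegree_add_le _ _)
    have hA : (C (α : ℚ) * (C a + C b * X) + C (β : ℚ) * (C b * X)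
        - C (i : ℚ) * (C a + C (2 * b) * X)).natDegree ≤ 1 := by
      compute_degree
    have h1 : ((C (α : ℚ) * (C a + C b * X) + C (β : ℚ) * (C b * X)
        - C (i : ℚ) * (C a + C (2 * b) * X)) * hpol a b α β i).natDegree ≤ i + 1 := by
      apply le_trans (natDegree_mul_le)
      omega
    have h2 : (X * (C a + C b * X) * derivative (hpol a b α β i)).natDegree ≤ i + 1 := by
      rcases eq_or_ne i 0 with rfl | hi
      · have : hpol a b α β 0 = 1 := rfl
        rw [this]
        simp
      · apply le_trans (natDegree_mul_le)
        have hXu : (X * (C a + C b * X) : ℚ[X]).natDegree ≤ 2 := by compute_degree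
        have hd : (derivative (hpol a b α β i)).natDegree ≤ i - 1 :=
          le_trans (natDegree_derivative_le _) (by omega)
        omega
    omega


lemma dvd_derivative_step {ξ : ℚ} {p : ℚ[X]} {m : ℕ} (h : (X - C ξ) ^ m ∣ p) :
    (X - C ξ) ^ (m - 1) ∣ derivative p := by
  obtain ⟨q, rfl⟩ := h
  rw [derivative_mul, derivative_pow]
  apply dvd_add
  · apply Dvd.dvd.mul_right
    apply Dvd.dvd.mul_right
    apply Dvd.dvd.mul_left
    exact dvd_rfl
  · exact Dvd.dvd.mul_right (pow_dvd_pow _ (Nat.sub_le m 1)) _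
lemma dvd_iterate_derivative {ξ : ℚ} {p : ℚ[X]} {m : ℕ} (h : (X - C ξ) ^ m ∣ p) :
    ∀ i : ℕ, (X - C ξ) ^ (m - i) ∣ derivative^[i] p := by
  intro i
  induction i with
  | zero => simpa using h
  | succ i IH =>
    rw [Function.iterate_succ_apply']
    have := dvd_derivative_step IH
    rwa [Nat.sub_sub] at this
lemma rootMultiplicity_le_natDegree {ξ : ℚ} {p : ℚ[X]} (hp : p ≠ 0) :
    rootMultiplicity ξ p ≤ p.natDegree := by
  have h := pow_rootMultiplicity_dvd p ξ
  have := Polynomial.natDegree_le_of_dvd h hp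
  simpa [natDegree_pow, natDegree_X_sub_C] using this


theorem mult_bound (a b ξ : ℚ) (hξ : Polynomial.eval ξ (X * (C a + C b * X)) ≠ 0) :
    ∀ s : ℕ, ∀ (α β : Fin s → ℕ) (lam : Fin s → ℚ) (f : ℚ[X]), f ≠ 0 →
      f = (∑ j, C (lam j) * X ^ (α j) * (C a + C b * X) ^ (β j)) →
      rootMultiplicity ξ f ≤ s * s := by
  intro s
  induction s using Nat.strong_induction_on with
  | _ s IH =>
  intro α β lam f hf0 hf
  set u : ℚ[X] := C a + C b * X with hu
  set g : Fin s → ℚ[X] := fun j => X ^ (α j) * u ^ (β j) with hg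
  have hf2 : f = ∑ j, C (lam j) * g j := by
    rw [hf]; apply Finset.sum_congr rfl; intro j _; rw [hg, mul_assoc]
  have hXu0 : (X * u : ℚ[X]) ≠ 0 := by
    intro h; rw [h] at hξ; simp at hξ
  have hξX : ξ ≠ 0 ∧ eval ξ u ≠ 0 := by
    rw [eval_mul, eval_X] at hξ
    exact ⟨fun h => hξ (by rw [h, zero_mul]), fun h => hξ (by rw [h, mul_zero])⟩
  have hgval : ∀ j, eval ξ (g j) ≠ 0 := by
    intro j
    rw [hg]
    simp only [eval_mul, eval_pow, eval_X]
    exact mul_ne_zero (pow_ne_zero _ hξX.1) (pow_ne_zero _ hξX.2)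
  by_cases hli : LinearIndependent ℚ g
  · -- independent case
    have hex : ∃ j0, lam j0 ≠ 0 := by
      by_contra hall
      push_neg at hall
      apply hf0
      rw [hf2]
      simp [hall]
    obtain ⟨j0, hj0⟩ := hex
    cases s with
    | zero => exact j0.elim0
    | succ s' =>
      set W := wrMat (s' + 1) g with hW
      have hWdet : W.det ≠ 0 := det_wrMat_ne_zero _ g hli
      have hiterf : ∀ i : ℕ, derivative^[i] f = ∑ j, C (lam j) * derivative^[i] (g j) := by
        intro i
        rw [hf2, iterate_derivative_sum]
        apply Finset.sum_congr rfl
        intro j _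
        rw [iterate_derivative_C_mul]
      set Nm := W.updateCol j0 (fun i => derivative^[(i : ℕ)] f) with hNm
      have hNdet : Nm.det = C (lam j0) * W.det := by
        have hfun : (fun i : Fin (s' + 1) => derivative^[(i : ℕ)] f)
            = fun k => ∑ j, (C (lam j)) • W k j := by
          funext k
          rw [hiterf]
          apply Finset.sum_congr rfl
          intro j _
          rw [smul_eq_mul]
          rfl
        rw [hNm, hfun, Matrix.det_updateCol_sum, smul_eq_mul]
      have hNdet0 : Nm.det ≠ 0 := by
        rw [hNdet]
        exact mul_ne_zero (fun h => hj0 (by simpa using (C_eq_zero.mp h))) hWdet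
      set m := rootMultiplicity ξ f with hm
      have hdvdN : (X - C ξ) ^ (m - s') ∣ Nm.det := by
        rw [Matrix.det_succ_column Nm j0]
        apply Finset.dvd_sum
        intro i _
        have h1 : (X - C ξ) ^ (m - s') ∣ Nm i j0 := by
          have he : Nm i j0 = derivative^[(i : ℕ)] f := by
            rw [hNm, Matrix.updateCol_self]
          rw [he]
          refine dvd_trans (pow_dvd_pow _ ?_)
            (dvd_iterate_derivative (pow_rootMultiplicity_dvd f ξ) (i : ℕ))
          have := Fin.is_le i
          omega
        exact (h1.mul_left _).mul_right _
      have hle1 : m - s' ≤ rootMultiplicity ξ Nm.det :=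
        (le_rootMultiplicity_iff hNdet0).mpr hdvdN
      have hrmN : rootMultiplicity ξ Nm.det = rootMultiplicity ξ W.det := by
        rw [hNdet, rootMultiplicity_mul (by rw [← hNdet]; exact hNdet0)]
        rw [rootMultiplicity_eq_zero (by simp [IsRoot]; exact hj0), zero_add]
      -- determinant identity
      set E := ∑ i : Fin (s' + 1), (i : ℕ) with hE
      set H : Matrix (Fin (s' + 1)) (Fin (s' + 1)) ℚ[X] :=
        Matrix.of (fun i j => hpol a b (α j) (β j) (i : ℕ)) with hH
      have hid : (X * u) ^ E * W.det = H.det * ∏ j, g j := by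
        have h1 : Matrix.diagonal (fun i : Fin (s' + 1) => (X * u) ^ (i : ℕ)) * W
            = H * Matrix.diagonal (fun j => g j) := by
          apply Matrix.ext
          intro i j
          rw [Matrix.diagonal_mul, Matrix.mul_diagonal]
          show (X * u) ^ (i : ℕ) * derivative^[(i : ℕ)] (g j)
            = hpol a b (α j) (β j) (i : ℕ) * g j
          have h2 := iterate_derivative_g a b (α j) (β j) (i : ℕ)
          rw [← hu] at h2
          have h3 : g j = X ^ α j * u ^ β j := rfl
          rw [h3]
          linear_combination h2
        have h2 := congrArg Matrix.det h1
        rw [Matrix.det_mul, Matrix.det_mul, Matrix.det_diagonal, Matrix.det_diagonal] at h2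
        rw [Finset.prod_pow_eq_pow_sum] at h2
        exact h2
      have hL0 : (X * u) ^ E * W.det ≠ 0 := mul_ne_zero (pow_ne_zero _ hXu0) hWdet
      have hH0 : H.det ≠ 0 := by
        intro h
        rw [hid, h, zero_mul] at hL0
        exact hL0 rfl
      have hrmW : rootMultiplicity ξ W.det = rootMultiplicity ξ H.det := by
        have e1 := rootMultiplicity_mul (x := ξ) hL0
        have e2 := rootMultiplicity_mul (x := ξ) (hid ▸ hL0)
        have e3 : rootMultiplicity ξ ((X * u) ^ E) = 0 := by
          apply rootMultiplicity_eq_zero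
          simp only [IsRoot, eval_pow]
          exact pow_ne_zero _ hξ
        have e4 : rootMultiplicity ξ (∏ j, g j) = 0 := by
          apply rootMultiplicity_eq_zero
          simp only [IsRoot, eval_prod]
          exact Finset.prod_ne_zero_iff.mpr (fun j _ => hgval j)
        have e5 := congrArg (rootMultiplicity ξ) hid
        rw [e1, e2, e3, e4, zero_add, add_zero] at e5
        exact e5
      have hdegH : H.det.natDegree ≤ E := by
        rw [Matrix.det_apply']
        apply natDegree_sum_le_of_forall_le
        intro σ _
        apply le_trans natDegree_mul_le
        have hsign : (natDegree ((Equiv.Perm.sign σ : ℤ) : ℚ[X])) = 0 := natDegree_intCast _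
        rw [hsign, zero_add]
        apply le_trans (natDegree_prod_le _ _)
        have : ∀ i : Fin (s' + 1), (H (σ i) i).natDegree ≤ ((σ i : ℕ)) := by
          intro i
          exact natDegree_hpol_le a b (α i) (β i) _
        calc ∑ i, (H (σ i) i).natDegree ≤ ∑ i : Fin (s' + 1), ((σ i : ℕ)) :=
              Finset.sum_le_sum (fun i _ => this i)
          _ = E := Equiv.sum_comp σ _
      have hrmH : rootMultiplicity ξ H.det ≤ E := le_trans (rootMultiplicity_le_natDegree hH0) hdegH
      have hEle : E ≤ (s' + 1) * s' := by
        rw [hE]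
        calc ∑ i : Fin (s' + 1), (i : ℕ) ≤ ∑ _i : Fin (s' + 1), s' :=
              Finset.sum_le_sum (fun i _ => Fin.is_le i)
          _ = (s' + 1) * s' := by simp [Finset.sum_const, mul_comm]
      have : m - s' ≤ (s' + 1) * s' := by
        calc m - s' ≤ rootMultiplicity ξ Nm.det := hle1
          _ = rootMultiplicity ξ W.det := hrmN
          _ = rootMultiplicity ξ H.det := hrmW
          _ ≤ E := hrmH
          _ ≤ (s' + 1) * s' := hEle
      have h7 : m ≤ (s' + 1) * s' + s' := Nat.sub_le_iff_le_add.mp this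
      calc m ≤ (s' + 1) * s' + s' := h7
        _ ≤ (s' + 1) * s' + (s' + 1) := by omega
        _ = (s' + 1) * (s' + 1) := (Nat.mul_succ _ _).symm
  · -- dependent case
    obtain ⟨cc, hcc, j1, hj1⟩ := Fintype.not_linearIndependent_iff.mp hli
    cases s with
    | zero => exact j1.elim0
    | succ s' =>
      have hrel : ∑ j, C (cc j) * g j = 0 := by
        rw [← hcc]
        apply Finset.sum_congr rfl
        intro j _
        rw [Polynomial.smul_eq_C_mul]
      set lam' : Fin (s' + 1) → ℚ := fun j => lam j - lam j1 / cc j1 * cc j with hlam'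
      have hlam'j1 : lam' j1 = 0 := by
        rw [hlam']
        field_simp
        simp
      have hf3 : f = ∑ j, C (lam' j) * g j := by
        have : ∑ j, C (lam' j) * g j
            = (∑ j, C (lam j) * g j) - C (lam j1 / cc j1) * ∑ j, C (cc j) * g j := by
          rw [Finset.mul_sum, ← Finset.sum_sub_distrib]
          apply Finset.sum_congr rfl
          intro j _
          show C (lam j - lam j1 / cc j1 * cc j) * g j
            = C (lam j) * g j - C (lam j1 / cc j1) * (C (cc j) * g j)
          have hCe : C (lam j - lam j1 / cc j1 * cc j)
              = C (lam j) - C (lam j1 / cc j1) * C (cc j) := by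
            rw [← C_mul, ← C_sub]
          rw [hCe]
          ring
        rw [this, hrel, mul_zero, sub_zero, hf2]
      have hf4 : f = ∑ k : Fin s', C (lam' (j1.succAbove k)) * X ^ (α (j1.succAbove k))
          * u ^ (β (j1.succAbove k)) := by
        rw [hf3, Fin.sum_univ_succAbove _ j1, hlam'j1, map_zero, zero_mul, zero_add]
        apply Finset.sum_congr rfl
        intro k _
        rw [hg, mul_assoc]
      have := IH s' (Nat.lt_succ_self s') (fun k => α (j1.succAbove k))
        (fun k => β (j1.succAbove k)) (fun k => lam' (j1.succAbove k)) f hf0 hf4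
      exact le_trans this (Nat.mul_le_mul (Nat.le_succ s') (Nat.le_succ s'))


lemma N_le_of_rep (N t : ℕ) (c : Fin (t + 1) → ℚ) (α β : Fin (t + 1) → ℕ) (a b : ℚ)
    (hrep : (∏ i ∈ Finset.Icc 1 N, (X ^ i - 1) : ℚ[X])
      = ∑ j, C (c j) * X ^ α j * (C a + C b * X) ^ β j) :
    N ≤ 2 * ((t + 1) * (t + 1)) + 1 := by
  set P : ℚ[X] := ∏ i ∈ Finset.Icc 1 N, (X ^ i - 1) with hP
  have hP0 : P ≠ 0 := by
    rw [hP]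
    apply Finset.prod_ne_zero_iff.mpr
    intro i hi
    have hi1 : 0 < i := by
      rw [Finset.mem_Icc] at hi; omega
    have := Polynomial.X_pow_sub_C_ne_zero (R := ℚ) hi1 1
    simpa using this
  have hm1 : N ≤ rootMultiplicity 1 P := by
    rw [le_rootMultiplicity_iff hP0]
    have hdvd : ∏ i ∈ Finset.Icc 1 N, (X - C 1 : ℚ[X]) ∣ P := by
      apply Finset.prod_dvd_prod_of_dvd
      intro i _
      rw [dvd_iff_isRoot]
      simp [IsRoot]
    rwa [Finset.prod_const, Nat.card_Icc, show N + 1 - 1 = N from rfl] at hdvd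
  have hm2 : N / 2 ≤ rootMultiplicity (-1) P := by
    rw [le_rootMultiplicity_iff hP0]
    set S : Finset ℕ := (Finset.Icc 1 N).filter (fun i => i % 2 = 0) with hS
    have hcard : S.card = N / 2 := by
      have himg : S = (Finset.Icc 1 (N / 2)).image (fun k => 2 * k) := by
        ext m
        simp only [hS, Finset.mem_filter, Finset.mem_Icc, Finset.mem_image]
        constructor
        · rintro ⟨⟨h1, h2⟩, h3⟩
          exact ⟨m / 2, by omega, by omega⟩
        · rintro ⟨k, ⟨h1, h2⟩, h3⟩
          omega
      rw [himg, Finset.card_image_of_injective _ (fun x y h => by omega), Nat.card_Icc]; omega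
    have hdvd1 : ∏ _i ∈ S, (X - C (-1) : ℚ[X]) ∣ ∏ i ∈ S, (X ^ i - 1 : ℚ[X]) := by
      apply Finset.prod_dvd_prod_of_dvd
      intro i hi
      have hev : Even i := by
        rw [hS, Finset.mem_filter] at hi
        exact Nat.even_iff.mpr hi.2
      rw [dvd_iff_isRoot]
      simp [IsRoot, hev.neg_one_pow]
    have hdvd2 : ∏ i ∈ S, (X ^ i - 1 : ℚ[X]) ∣ P := by
      rw [hP]
      apply Finset.prod_dvd_prod_of_subset
      rw [hS]
      exact Finset.filter_subset _ _
    have := dvd_trans hdvd1 hdvd2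
    rwa [Finset.prod_const, hcard] at this
  rcases eq_or_ne b 0 with rfl | hb
  · -- b = 0
    have hrep2 : P = ∑ j, C (c j * a ^ β j) * X ^ α j * (C 1 + C 0 * X) ^ (β j : ℕ) := by
      rw [hrep]
      apply Finset.sum_congr rfl
      intro j _
      rw [C_mul, C_pow]
      simp only [C_0, zero_mul, add_zero, C_1]
      rw [one_pow]
      ring
    have h := mult_bound 1 0 1 (by simp) (t + 1) α β (fun j => c j * a ^ β j) P hP0 hrep2
    calc N ≤ rootMultiplicity 1 P := hm1
      _ ≤ (t + 1) * (t + 1) := h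
      _ ≤ 2 * ((t + 1) * (t + 1)) + 1 := by omega
  · rcases eq_or_ne a 0 with rfl | ha
    · -- a = 0
      have hrep2 : P = ∑ j, C (c j * b ^ β j) * X ^ (α j + β j) * (C 1 + C 0 * X) ^ (β j : ℕ) := by
        rw [hrep]
        apply Finset.sum_congr rfl
        intro j _
        rw [C_mul, C_pow, pow_add]
        simp only [C_0, zero_mul, add_zero, zero_add, C_1, one_pow, mul_pow]
        ring
      have h := mult_bound 1 0 1 (by simp) (t + 1) (fun j => α j + β j) β
        (fun j => c j * b ^ β j) P hP0 hrep2
      calc N ≤ rootMultiplicity 1 P := hm1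
        _ ≤ (t + 1) * (t + 1) := h
        _ ≤ 2 * ((t + 1) * (t + 1)) + 1 := by omega
    · rcases eq_or_ne (a + b) 0 with hab | hab
      · -- a + b = 0, use ξ = -1
        have hξ : Polynomial.eval (-1 : ℚ) (X * (C a + C b * X)) ≠ 0 := by
          simp only [eval_mul, eval_add, eval_C, eval_X]
          have : a - b ≠ 0 := by
            intro h
            apply hb
            have : a = b := by linarith
            linarith [hab, this]
          intro h
          apply this
          nlinarith [h]
        have h := mult_bound a b (-1) hξ (t + 1) α β c P hP0 hrep
        have hN2 : N / 2 ≤ (t + 1) * (t + 1) := le_trans hm2 h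
        omega
      · -- a + b ≠ 0, use ξ = 1
        have hξ : Polynomial.eval (1 : ℚ) (X * (C a + C b * X)) ≠ 0 := by
          simp only [eval_mul, eval_add, eval_C, eval_X]
          intro h
          apply hab
          nlinarith [h]
        have h := mult_bound a b 1 hξ (t + 1) α β c P hP0 hrep
        calc N ≤ rootMultiplicity 1 P := hm1
          _ ≤ (t + 1) * (t + 1) := h
          _ ≤ 2 * ((t + 1) * (t + 1)) + 1 := by omega


lemma arith_bound (k n t N : ℕ) (ht : t ≤ n ^ k + k)
    (hNb : N ≤ 2 * ((t + 1) * (t + 1)) + 1) :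
    N ≤ n ^ (4 * k + 6 + 2 ^ (2 * k + 6)) + (4 * k + 6 + 2 ^ (2 * k + 6)) := by
  set M := n ^ k + (k + 1) with hM
  have h1 : t + 1 ≤ M := by omega
  have h2 : N ≤ 2 * (M * M) + 1 :=
    le_trans hNb (by gcongr <;> omega)
  have hkey : 2 * ((k + 2) * (k + 2)) + 1 ≤ 2 ^ (2 * k + 6) := by
    have hk : k + 2 ≤ 2 ^ (k + 2) := (Nat.lt_two_pow_self (n := k + 2)).le
    have h3 : (k + 2) * (k + 2) ≤ 2 ^ (2 * k + 4) := by
      calc (k + 2) * (k + 2) ≤ 2 ^ (k + 2) * 2 ^ (k + 2) := Nat.mul_le_mul hk hk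
        _ = 2 ^ (2 * k + 4) := by rw [← pow_add]; congr 1; omega
    have h4 : 2 ^ (2 * k + 6) = 4 * 2 ^ (2 * k + 4) := by
      rw [show 2 * k + 6 = 2 * k + 4 + 2 from by omega, pow_add]; ring
    have h5 : (1:ℕ) ≤ 2 ^ (2 * k + 4) := Nat.one_le_two_pow
    rw [h4]
    omega
  rcases Nat.lt_or_ge n 2 with hn | hn
  · -- n ≤ 1
    have hnk : n ^ k ≤ 1 := by
      calc n ^ k ≤ 1 ^ k := Nat.pow_le_pow_left (by omega) k
        _ = 1 := one_pow k
    have hM2 : M ≤ k + 2 := by omega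
    have : N ≤ 2 * ((k + 2) * (k + 2)) + 1 := le_trans h2 (by gcongr <;> omega)
    have := le_trans this hkey
    omega
  · -- n ≥ 2
    have hnk1 : 1 ≤ n ^ k := Nat.one_le_pow _ _ (by omega)
    have hM3 : M ≤ (k + 2) * n ^ k := by
      calc M = n ^ k + (k + 1) := hM
        _ ≤ n ^ k + (k + 1) * n ^ k := by
            have : k + 1 ≤ (k + 1) * n ^ k := Nat.le_mul_of_pos_right _ (by omega)
            omega
        _ = (k + 2) * n ^ k := by ring
    have h5 : N ≤ 2 * (((k + 2) * n ^ k) * ((k + 2) * n ^ k)) + 1 := by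
      have := Nat.mul_le_mul hM3 hM3
      omega
    have h6 : 2 * (((k + 2) * n ^ k) * ((k + 2) * n ^ k)) + 1
        ≤ (2 * ((k + 2) * (k + 2)) + 1) * (n ^ k * n ^ k) := by
      have h1a : 1 ≤ n ^ k * n ^ k := Nat.mul_le_mul hnk1 hnk1
      have e2 : ((k + 2) * n ^ k) * ((k + 2) * n ^ k)
          = ((k + 2) * (k + 2)) * (n ^ k * n ^ k) := by ring
      have e3 : (2 * ((k + 2) * (k + 2)) + 1) * (n ^ k * n ^ k)
          = 2 * (((k + 2) * (k + 2)) * (n ^ k * n ^ k)) + (n ^ k * n ^ k) := by ring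
      rw [e2, e3]
      omega
    have h7 : (2 * ((k + 2) * (k + 2)) + 1) * (n ^ k * n ^ k) ≤ 2 ^ (2 * k + 6) * n ^ (2 * k) := by
      have e : n ^ k * n ^ k = n ^ (2 * k) := by rw [← pow_add]; congr 1; omega
      rw [← e]
      exact Nat.mul_le_mul_right _ hkey
    have h8 : 2 ^ (2 * k + 6) * n ^ (2 * k) ≤ n ^ (2 * k + 6) * n ^ (2 * k) :=
      Nat.mul_le_mul_right _ (Nat.pow_le_pow_left hn _)
    have h9 : n ^ (2 * k + 6) * n ^ (2 * k) = n ^ (4 * k + 6) := by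
      rw [← pow_add]; congr 1; omega
    have h10 : n ^ (4 * k + 6) ≤ n ^ (4 * k + 6 + 2 ^ (2 * k + 6)) :=
      Nat.pow_le_pow_right (by omega) (by omega)
    omega

/-- Let `P_n = ∏_{i=1}^{N_n} (X^i − 1)`. Suppose that for every `n` the polynomial `P_n` can be
written as `∑_{j=0}^{t_n} c_j X^{α_j}(a_n + b_n X)^{β_j}` with rational `a_n, b_n, c_j`, where
`t_n` and the bit sizes of all the `c_j`, `α_j`, `β_j` are bounded by a polynomial in `n`
(no bound being assumed on `a_n` and `b_n`). Then `N_n` is bounded by a polynomial in `n`. -/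
theorem stmt11 (N : ℕ → ℕ) (hN : ∀ n, 0 < N n)
    (hrep : ∃ k : ℕ, ∀ n : ℕ,
      ∃ (t : ℕ) (c : Fin (t + 1) → ℚ) (α β : Fin (t + 1) → ℕ) (a b : ℚ),
        t ≤ n ^ k + k ∧
        (∀ j, ratBitSize (c j) ≤ n ^ k + k) ∧
        (∀ j, Nat.size (α j) ≤ n ^ k + k) ∧
        (∀ j, Nat.size (β j) ≤ n ^ k + k) ∧
        (∏ i ∈ Finset.Icc 1 (N n), (X ^ i - 1) : ℚ[X]) =
          ∑ j, Polynomial.C (c j) * X ^ α j *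
            (Polynomial.C a + Polynomial.C b * X) ^ β j) :
    ∃ k' : ℕ, ∀ n : ℕ, N n ≤ n ^ k' + k' := by
  obtain ⟨k, hk⟩ := hrep
  refine ⟨4 * k + 6 + 2 ^ (2 * k + 6), fun n => ?_⟩
  obtain ⟨t, c, α, β, a, b, ht, -, -, -, heq⟩ := hk n
  exact arith_bound k n t (N n) ht (N_le_of_rep (N n) t c α β a b heq)
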